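/- Let c ∈ (0, 1/2] and γ ∈ (0,1). Let P be a tree-structured Bayes net over {0,1}^n, i.e., a Bayes net whose structure assigns to each non-root node i a single parent π(i) (and roots have no parents), which is c-balanced (every entry of the conditional probability table lies in [c, 1−c]: the root marginals P(X_i = 1) for roots, and the conditional probabilities P(X_i = 1 | X_{π(i)} = b) for non-roots i and b ∈ {0,1}) and γ-non-degenerate (|P(X_i = 1 | X_{π(i)} = 1) − P(X_i = 1 | X_{π(i)} = 0)| ≥ γ for every non-root node i). Then for every non-root node i, I(X_i; X_{π(i)}) ≥ c·γ²/(2·ln 2), where X ∼ P and the mutual information is in bits. -/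

import Mathlib

/-- The tree-structured Bayes net distribution on `{0,1}^n` with parent map `par`
(`par i = none` for roots), root marginals `r i = P(X_i = 1)` and conditional
probabilities `t i b = P(X_i = 1 | X_{par i} = b)` for non-roots. -/
noncomputable def treeBN {n : ℕ} (par : Fin n → Option (Fin n))
    (r : Fin n → ℝ) (t : Fin n → Bool → ℝ) : (Fin n → Bool) → ℝ :=
  fun x => ∏ i, match par i with
    | none => if x i then r i else 1 - r i
    | some j => if x i then t i (x j) else 1 - t i (x j)

/-- Mutual information (in bits) of a joint distribution `ν` of a pair of `{0,1}`-valued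
random variables; terms where the joint probability is `0` contribute `0`
(automatic since `0 * log 0 = 0`). -/
noncomputable def miBB (ν : Bool × Bool → ℝ) : ℝ :=
  ∑ z : Bool × Bool,
    ν z * Real.logb 2 (ν z / ((∑ b : Bool, ν (z.1, b)) * (∑ a : Bool, ν (a, z.2))))

/-- The joint distribution of the pair `(X_i, X_j)` under the distribution `P` on
`{0,1}^n`. -/
noncomputable def pairLaw {n : ℕ} (P : (Fin n → Bool) → ℝ) (i j : Fin n) :
    Bool × Bool → ℝ :=
  fun ab => ∑ x ∈ Finset.univ.filter (fun x : Fin n → Bool => x i = ab.1 ∧ x j = ab.2), P x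

open Finset

section BN

variable {n : ℕ} (par : Fin n → Option (Fin n)) (r : Fin n → ℝ) (t : Fin n → Bool → ℝ)

/-- Factor of node `k`. -/
noncomputable def Ffac (x : Fin n → Bool) (k : Fin n) : ℝ :=
  match par k with
  | none => if x k then r k else 1 - r k
  | some p => if x k then t k (x p) else 1 - t k (x p)

/-- Configurations satisfying constraints `v`. -/
def Sat (v : Fin n → Option Bool) : Finset (Fin n → Bool) :=
  Finset.univ.filter (fun x => ∀ k b, v k = some b → x k = b)

noncomputable def Zb (v : Fin n → Option Bool) (s : Finset (Fin n)) : ℝ :=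
  ∑ x ∈ Sat v, ∏ k ∈ s, Ffac par r t x k

def below (m : ℕ) : Finset (Fin n) := Finset.univ.filter (fun l => (l : ℕ) < m)

lemma mem_Sat {v : Fin n → Option Bool} {x : Fin n → Bool} :
    x ∈ Sat v ↔ ∀ k b, v k = some b → x k = b := by simp [Sat]

lemma mem_below {m : ℕ} {l : Fin n} : l ∈ (below m : Finset (Fin n)) ↔ (l : ℕ) < m := by
  simp [below]

lemma Sat_update {v : Fin n → Option Bool} {k : Fin n} (hv : v k = none) (b0 : Bool) :
    Sat (Function.update v k (some b0)) = (Sat v).filter (fun x => x k = b0) := by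
  ext x
  simp only [mem_Sat, Finset.mem_filter]
  constructor
  · intro h
    refine ⟨fun m b hm => ?_, h k b0 (by rw [Function.update_self])⟩
    rcases eq_or_ne m k with rfl | hne
    · rw [hv] at hm; cases hm
    · exact h m b (by rw [Function.update_of_ne hne]; exact hm)
  · rintro ⟨hx, hxk⟩
    intro m b hm
    rcases eq_or_ne m k with rfl | hne
    · rw [Function.update_self] at hm
      cases hm; exact hxk
    · rw [Function.update_of_ne hne] at hm
      exact hx m b hm

variable (hpar : ∀ i j : Fin n, par i = some j → j < i)

lemma Ffac_congr {x y : Fin n → Bool} {l : Fin n} (h1 : x l = y l)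
    (h2 : ∀ p, par l = some p → x p = y p) : Ffac par r t x l = Ffac par r t y l := by
  rcases hl : par l with _ | p <;> simp only [Ffac, hl, h1]
  rw [h2 p hl]

include hpar in
/-- Summing out the top free variable. -/
lemma Zb_elim (v : Fin n → Option Bool) (s : Finset (Fin n)) (k : Fin n)
    (hk : k ∈ s) (hmax : ∀ l ∈ s, l ≤ k) (hv : v k = none) :
    Zb par r t v s = Zb par r t (Function.update v k (some false)) (s.erase k) := by
  have hSf := Sat_update hv false
  have hSt := Sat_update hv true
  -- any constrained coordinate differs from k
  have hne_k : ∀ m b, v m = some b → m ≠ k := by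
    rintro m b hm rfl; rw [hv] at hm; cases hm
  have hmem : ∀ b0 : Bool, ∀ x ∈ (Sat v).filter (fun x => x k = (!b0)),
      Function.update x k b0 ∈ (Sat v).filter (fun x => x k = b0) := by
    intro b0 x hx
    rw [Finset.mem_filter] at hx ⊢
    refine ⟨mem_Sat.2 fun m b hm => ?_, Function.update_self _ _ _⟩
    rw [Function.update_of_ne (hne_k m b hm)]
    exact mem_Sat.1 hx.1 m b hm
  have hinv : ∀ b0 : Bool, ∀ x : Fin n → Bool, x k = b0 →
      Function.update (Function.update x k (!b0)) k b0 = x := by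
    intro b0 x hx; funext m
    rcases eq_or_ne m k with rfl | hne
    · rw [Function.update_self, hx]
    · rw [Function.update_of_ne hne, Function.update_of_ne hne]
  -- product over erased set unchanged by updating coordinate k
  have hprod : ∀ (x : Fin n → Bool) (b0 : Bool),
      ∏ l ∈ s.erase k, Ffac par r t (Function.update x k b0) l
        = ∏ l ∈ s.erase k, Ffac par r t x l := by
    intro x b0
    refine Finset.prod_congr rfl fun l hl => ?_
    have hlk : l ≠ k := (Finset.mem_erase.1 hl).1
    refine Ffac_congr par r t (Function.update_of_ne hlk _ _) fun p hp => ?_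
    have hpk : p ≠ k := by
      have h1 : p < l := hpar l p hp
      have h2 : l ≤ k := hmax l (Finset.mem_erase.1 hl).2
      exact ne_of_lt (lt_of_lt_of_le h1 h2)
    exact Function.update_of_ne hpk _ _
  -- the key one-variable sum
  have hone : ∀ x : Fin n → Bool, x k = false →
      Ffac par r t x k + Ffac par r t (Function.update x k true) k = 1 := by
    intro x hx
    rcases hk' : par k with _ | p
    · simp only [Ffac, hk', hx, Function.update_self, if_false, if_true]
      norm_num
    · have hpk : p ≠ k := ne_of_lt (hpar k p hk')
      simp only [Ffac, hk', hx, Function.update_self, Function.update_of_ne hpk,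
        if_false, if_true]
      norm_num
  -- split sum over Sat v by value at k
  rw [Zb, ← Finset.sum_filter_add_sum_filter_not (Sat v) (fun x => x k = false)]
  have hfilt : (Sat v).filter (fun x => ¬ x k = false) = (Sat v).filter (fun x => x k = true) := by
    apply Finset.filter_congr; intro x _; simp
  rw [hfilt]
  have h2 : ∑ x ∈ (Sat v).filter (fun x => x k = true), ∏ l ∈ s, Ffac par r t x l
      = ∑ x ∈ (Sat v).filter (fun x => x k = false),
          (∏ l ∈ s.erase k, Ffac par r t x l) * Ffac par r t (Function.update x k true) k := by
    refine Finset.sum_nbij' (fun x => Function.update x k false)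
      (fun x => Function.update x k true) ?_ ?_ ?_ ?_ ?_
    · exact fun x hx => by simpa using hmem false x (by simpa using hx)
    · exact fun x hx => by simpa using hmem true x (by simpa using hx)
    · intro x hx
      exact hinv true x (Finset.mem_filter.1 hx).2
    · intro x hx
      exact hinv false x (Finset.mem_filter.1 hx).2
    · intro x hx
      have hxk : x k = true := (Finset.mem_filter.1 hx).2
      have e1 : Function.update (Function.update x k false) k true = x := hinv true x hxk
      rw [hprod x false, e1, Finset.prod_erase_mul s _ hk]
  rw [h2, ← Finset.sum_add_distrib, Zb, hSf]
  refine Finset.sum_congr rfl fun x hx => ?_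
  have hxk : x k = false := (Finset.mem_filter.1 hx).2
  rw [← Finset.prod_erase_mul s _ hk, ← mul_add, hone x hxk, mul_one]

include hpar in
/-- Changing the value of a constraint above everything in `s`. -/
lemma Zb_changeVal (v : Fin n → Option Bool) (s : Finset (Fin n)) (k : Fin n) (b1 b2 : Bool)
    (hv : v k = some b1) (hs : ∀ l ∈ s, (l : ℕ) < (k : ℕ)) :
    Zb par r t v s = Zb par r t (Function.update v k (some b2)) s := by
  have hxk : ∀ x ∈ Sat v, x k = b1 := fun x hx => mem_Sat.1 hx k b1 hv
  have hmem : ∀ x ∈ Sat v, Function.update x k b2 ∈ Sat (Function.update v k (some b2)) := by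
    intro x hx
    refine mem_Sat.2 fun m b hm => ?_
    rcases eq_or_ne m k with rfl | hne
    · rw [Function.update_self] at hm ⊢; cases hm; rfl
    · rw [Function.update_of_ne hne] at hm ⊢
      exact mem_Sat.1 hx m b hm
  have hmem' : ∀ y ∈ Sat (Function.update v k (some b2)), Function.update y k b1 ∈ Sat v := by
    intro y hy
    refine mem_Sat.2 fun m b hm => ?_
    rcases eq_or_ne m k with rfl | hne
    · rw [hv] at hm; cases hm; rw [Function.update_self]
    · rw [Function.update_of_ne hne]
      exact mem_Sat.1 hy m b (by rw [Function.update_of_ne hne]; exact hm)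
  have hyk : ∀ y ∈ Sat (Function.update v k (some b2)), y k = b2 := fun y hy =>
    mem_Sat.1 hy k b2 (by rw [Function.update_self])
  have hupdupd : ∀ (x : Fin n → Bool) (b b' : Bool), x k = b' →
      Function.update (Function.update x k b) k b' = x := by
    intro x b b' hx; funext m
    rcases eq_or_ne m k with rfl | hne
    · rw [Function.update_self, hx]
    · rw [Function.update_of_ne hne, Function.update_of_ne hne]
  refine Finset.sum_nbij' (fun x => Function.update x k b2)
    (fun y => Function.update y k b1) hmem hmem' ?_ ?_ ?_
  · exact fun x hx => hupdupd x b2 b1 (hxk x hx)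
  · exact fun y hy => hupdupd y b1 b2 (hyk y hy)
  · intro x hx
    refine Finset.prod_congr rfl fun l hl => ?_
    have hlk : l ≠ k := by
      intro h; exact absurd (hs l hl) (by rw [h]; omega)
    refine (Ffac_congr par r t (Function.update_of_ne hlk _ _) fun p hp => ?_).symm
    have hpk : p ≠ k := by
      have h1 : (p : ℕ) < (l : ℕ) := hpar l p hp
      have h2 := hs l hl
      intro h; rw [h] at h1; omega
    exact Function.update_of_ne hpk _ _

include hpar in
lemma Zb_reduce (d : ℕ) : ∀ (m : ℕ) (v : Fin n → Option Bool), m + d ≤ n →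
    (∀ k : Fin n, m ≤ (k : ℕ) → (k : ℕ) < m + d → v k = none) →
    Zb par r t v (below (m + d)) =
      Zb par r t (fun l => if m ≤ (l : ℕ) ∧ (l : ℕ) < m + d then some false else v l) (below m) := by
  induction d with
  | zero =>
    intro m v hmn hv
    have : (fun l : Fin n => if m ≤ (l : ℕ) ∧ (l : ℕ) < m + 0 then some false else v l) = v := by
      funext l; rw [if_neg (by omega)]
    rw [this, Nat.add_zero]
  | succ d ih =>
    intro m v hmn hv
    have hkn : m + d < n := by omega
    set k : Fin n := ⟨m + d, hkn⟩ with hkdef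
    have hkval : (k : ℕ) = m + d := rfl
    have hkmem : k ∈ (below (m + (d+1)) : Finset (Fin n)) := mem_below.2 (by omega)
    have hmax : ∀ l ∈ (below (m + (d+1)) : Finset (Fin n)), l ≤ k := by
      intro l hl
      have := mem_below.1 hl
      exact Fin.le_def.2 (by omega)
    have hvk : v k = none := hv k (by omega) (by omega)
    have herase : (below (m + (d+1)) : Finset (Fin n)).erase k = below (m + d) := by
      ext l
      simp only [Finset.mem_erase, mem_below, Ne, Fin.ext_iff, hkval]
      omega
    rw [Zb_elim par r t hpar v _ k hkmem hmax hvk, herase]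
    rw [ih m (Function.update v k (some false)) (by omega) ?side]
    case side =>
      intro l h1 h2
      rw [Function.update_of_ne (by simp only [Ne, Fin.ext_iff, hkval]; omega)]
      exact hv l h1 (by omega)
    congr 1
    funext l
    rcases eq_or_ne l k with rfl | hne
    · rw [if_neg (by rw [hkval]; omega), Function.update_self,
        if_pos (by rw [hkval]; omega)]
    · rw [Function.update_of_ne hne]
      have hlk : (l : ℕ) ≠ m + d := by
        intro h; exact hne (Fin.ext (by rw [h, hkval]))
      by_cases hcond : m ≤ (l : ℕ) ∧ (l : ℕ) < m + d
      · rw [if_pos hcond, if_pos (by omega)]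
      · rw [if_neg hcond, if_neg (by omega)]

lemma Zb_empty (v : Fin n → Option Bool) (hv : ∀ l, v l = some false) :
    Zb par r t v ∅ = 1 := by
  have : Sat v = {fun _ => false} := by
    ext x
    simp only [mem_Sat, Finset.mem_singleton]
    constructor
    · intro h; funext l; exact h l false (hv l)
    · rintro rfl l b hb; rw [hv l] at hb; cases hb; rfl
  rw [Zb, this]
  simp

end BN

section BN2

variable {n : ℕ} (par : Fin n → Option (Fin n)) (r : Fin n → ℝ) (t : Fin n → Bool → ℝ)
variable {c : ℝ}

lemma Ffac_mem (hbal_root : ∀ i : Fin n, par i = none → r i ∈ Set.Icc c (1 - c))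
    (hbal : ∀ i j : Fin n, par i = some j → ∀ b : Bool, t i b ∈ Set.Icc c (1 - c))
    (x : Fin n → Bool) (k : Fin n) : Ffac par r t x k ∈ Set.Icc c (1 - c) := by
  rcases hk : par k with _ | p
  · have h := hbal_root k hk
    simp only [Ffac, hk]
    split
    · exact h
    · exact ⟨by linarith [h.2], by linarith [h.1]⟩
  · have h := hbal k p hk (x p)
    simp only [Ffac, hk]
    split
    · exact h
    · exact ⟨by linarith [h.2], by linarith [h.1]⟩

lemma Sat_single (j : Fin n) (b : Bool) :
    Sat (fun m => if m = j then some b else none) =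
      Finset.univ.filter (fun x : Fin n → Bool => x j = b) := by
  ext x
  simp only [mem_Sat, Finset.mem_filter, Finset.mem_univ, true_and]
  constructor
  · intro h; exact h j b (by rw [if_pos rfl])
  · intro h k b' hk
    by_cases hkj : k = j
    · subst hkj; rw [if_pos rfl] at hk; cases hk; exact h
    · rw [if_neg hkj] at hk; cases hk

lemma Sat_none : Sat (fun _ : Fin n => (none : Option Bool)) = Finset.univ := by
  ext x; simp [mem_Sat]

lemma below_erase (k : Fin n) :
    ((below ((k : ℕ) + 1) : Finset (Fin n))).erase k = below (k : ℕ) := by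
  ext l
  simp only [Finset.mem_erase, mem_below, Ne, Fin.ext_iff]
  omega

lemma univ_eq_below : (Finset.univ : Finset (Fin n)) = below n := by
  ext l; simp [mem_below, l.isLt]

variable (hpar : ∀ i j : Fin n, par i = some j → j < i)

include hpar in
lemma Zb_total : Zb par r t (fun _ => none) Finset.univ = 1 := by
  rw [univ_eq_below]
  have h := Zb_reduce par r t hpar n 0 (fun _ => none) (by omega) (fun k _ _ => rfl)
  rw [Nat.zero_add] at h
  rw [h]
  have hb0 : (below 0 : Finset (Fin n)) = ∅ := by ext l; simp [mem_below]
  rw [hb0]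
  exact Zb_empty par r t _ (fun l => by have := l.isLt; rw [if_pos (by omega)])

end BN2

section BN3

variable {n : ℕ} (par : Fin n → Option (Fin n)) (r : Fin n → ℝ) (t : Fin n → Bool → ℝ)
variable {c : ℝ}
variable (hpar : ∀ i j : Fin n, par i = some j → j < i)

/-- Constraint: `x j = b`, everything above `j` frozen to `false`. -/
def wfun (j : Fin n) (b : Bool) : Fin n → Option Bool :=
  fun l => if (j : ℕ) + 1 ≤ (l : ℕ) then some false else (if l = j then some b else none)

lemma treeBN_eq (x : Fin n → Bool) : treeBN par r t x = ∏ k, Ffac par r t x k := rfl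

include hpar in
lemma marg_eq (j : Fin n) (b : Bool) :
    Zb par r t (fun m => if m = j then some b else none) Finset.univ
      = Zb par r t (wfun j b) (below ((j : ℕ) + 1)) := by
  have hjn := j.isLt
  rw [univ_eq_below]
  have h := Zb_reduce par r t hpar (n - ((j : ℕ) + 1)) ((j : ℕ) + 1)
      (fun m => if m = j then some b else none) (by omega) ?hv
  case hv =>
    intro k h1 _
    show (if k = j then some b else none) = none
    rw [if_neg (by intro h; subst h; omega)]
  rw [show (j : ℕ) + 1 + (n - ((j : ℕ) + 1)) = n from by omega] at h
  rw [h]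
  congr 1
  funext l
  have hln := l.isLt
  simp only [wfun]
  by_cases h1 : (j : ℕ) + 1 ≤ (l : ℕ)
  · rw [if_pos ⟨h1, by omega⟩, if_pos h1]
  · rw [if_neg (fun hh => h1 hh.1), if_neg h1]

include hpar in
lemma pair_eq (i j : Fin n) (hij : par i = some j) (a b : Bool) :
    pairLaw (treeBN par r t) i j (a, b)
      = (if a then t i b else 1 - t i b) * Zb par r t (wfun j b) (below ((j : ℕ) + 1)) := by
  have hji : (j : ℕ) < (i : ℕ) := hpar i j hij
  have hin := i.isLt
  have hjneqi : j ≠ i := fun h => by rw [h] at hji; omega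
  set v0 : Fin n → Option Bool :=
    Function.update (fun m => if m = j then some b else none) i (some a) with hv0def
  have hv0 : Sat v0 = Finset.univ.filter (fun x : Fin n → Bool => x i = a ∧ x j = b) := by
    ext x
    simp only [hv0def, mem_Sat, Finset.mem_filter, Finset.mem_univ, true_and]
    constructor
    · intro h
      refine ⟨h i a (by rw [Function.update_self]), h j b ?_⟩
      rw [Function.update_of_ne hjneqi, if_pos rfl]
    · rintro ⟨h1, h2⟩ k b' hk
      rcases eq_or_ne k i with rfl | hki
      · rw [Function.update_self] at hk; cases hk; exact h1
      · rw [Function.update_of_ne hki] at hk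
        by_cases hkj : k = j
        · subst hkj; rw [if_pos rfl] at hk; cases hk; exact h2
        · rw [if_neg hkj] at hk; cases hk
  have hpl : pairLaw (treeBN par r t) i j (a, b) = Zb par r t v0 Finset.univ := by
    rw [pairLaw, Zb, hv0]
    rfl
  rw [hpl, univ_eq_below]
  -- step o1 : eliminate everything above i
  have h1 := Zb_reduce par r t hpar (n - ((i : ℕ) + 1)) ((i : ℕ) + 1) v0 (by omega) ?hv1
  case hv1 =>
    intro k hk1 _
    have hki : k ≠ i := by intro h; subst h; omega
    show v0 k = none
    rw [hv0def, Function.update_of_ne hki]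
    show (if k = j then some b else none) = none
    rw [if_neg (by intro h; subst h; omega)]
  rw [show (i : ℕ) + 1 + (n - ((i : ℕ) + 1)) = n from by omega] at h1
  set v1 : Fin n → Option Bool :=
    fun l => if (i : ℕ) + 1 ≤ (l : ℕ) ∧ (l : ℕ) < n
      then some false else v0 l with hv1def
  rw [h1]
  -- values of v1 at i and j
  have hv1i : v1 i = some a := by
    show (if (i : ℕ) + 1 ≤ (i : ℕ) ∧ (i : ℕ) < n then some false else v0 i) = some a
    rw [if_neg (by omega), hv0def, Function.update_self]
  have hv1j : v1 j = some b := by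
    show (if (i : ℕ) + 1 ≤ (j : ℕ) ∧ (j : ℕ) < n then some false else v0 j) = some b
    rw [if_neg (by omega), hv0def, Function.update_of_ne hjneqi]
    show (if j = j then some b else none) = some b
    rw [if_pos rfl]
  -- step o2 : pull out the factor of node i
  have himem : i ∈ (below ((i : ℕ) + 1) : Finset (Fin n)) := mem_below.2 (by omega)
  have ho2 : Zb par r t v1 (below ((i : ℕ) + 1))
      = (if a then t i b else 1 - t i b) * Zb par r t v1 (below (i : ℕ)) := by
    rw [Zb, Zb, Finset.mul_sum]
    refine Finset.sum_congr rfl fun x hx => ?_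
    have hxi : x i = a := mem_Sat.1 hx i a hv1i
    have hxj : x j = b := mem_Sat.1 hx j b hv1j
    rw [← Finset.prod_erase_mul _ _ himem, below_erase, mul_comm]
    congr 1
    simp only [Ffac, hij, hxi, hxj]
  rw [ho2]
  congr 1
  -- step o3 : eliminate between j and i
  have h3 := Zb_reduce par r t hpar ((i : ℕ) - ((j : ℕ) + 1)) ((j : ℕ) + 1) v1 (by omega) ?hv3
  case hv3 =>
    intro k hk1 hk2
    rw [show (j:ℕ) + 1 + ((i:ℕ) - ((j:ℕ)+1)) = (i:ℕ) from by omega] at hk2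
    show (if (i : ℕ) + 1 ≤ (k : ℕ) ∧ (k : ℕ) < n then some false else v0 k) = none
    rw [if_neg (by omega), hv0def,
      Function.update_of_ne (by intro h; subst h; omega)]
    show (if k = j then some b else none) = none
    rw [if_neg (by intro h; subst h; omega)]
  rw [show (j : ℕ) + 1 + ((i : ℕ) - ((j : ℕ) + 1)) = (i : ℕ) from by omega] at h3
  rw [h3]
  set v2 : Fin n → Option Bool :=
    fun l => if (j : ℕ) + 1 ≤ (l : ℕ) ∧ (l : ℕ) < (i : ℕ)
      then some false else v1 l with hv2def
  -- step o4 : change the irrelevant constraint at i to false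
  have hv2i : v2 i = some a := by
    show (if (j : ℕ) + 1 ≤ (i : ℕ) ∧ (i : ℕ) < (i : ℕ) then some false else v1 i) = some a
    rw [if_neg (by omega)]; exact hv1i
  have h4 := Zb_changeVal par r t hpar v2 (below ((j : ℕ) + 1)) i a false hv2i
      (fun l hl => by have := mem_below.1 hl; omega)
  rw [h4]
  -- step o5 : identify the resulting constraint function with `wfun j b`
  congr 1
  funext l
  have hln := l.isLt
  rw [Function.update_apply]
  rcases eq_or_ne l i with rfl | hli
  · rw [if_pos rfl, wfun, if_pos (by omega)]
  · rw [if_neg hli]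
    have hlival : (l : ℕ) ≠ (i : ℕ) := fun h => hli (Fin.ext h)
    show (if (j : ℕ) + 1 ≤ (l : ℕ) ∧ (l : ℕ) < (i : ℕ) then some false else v1 l)
      = (if (j : ℕ) + 1 ≤ (l : ℕ) then some false else (if l = j then some b else none))
    by_cases h1 : (j : ℕ) + 1 ≤ (l : ℕ)
    · by_cases h2 : (l : ℕ) < (i : ℕ)
      · rw [if_pos ⟨h1, h2⟩, if_pos h1]
      · rw [if_neg (by omega)]
        show (if (i : ℕ) + 1 ≤ (l : ℕ) ∧ (l : ℕ) < n then some false else v0 l)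
          = (if (j : ℕ) + 1 ≤ (l : ℕ) then some false else (if l = j then some b else none))
        rw [if_pos ⟨by omega, by omega⟩, if_pos h1]
    · rw [if_neg (fun hh => h1 hh.1)]
      show (if (i : ℕ) + 1 ≤ (l : ℕ) ∧ (l : ℕ) < n then some false else v0 l)
        = (if (j : ℕ) + 1 ≤ (l : ℕ) then some false else (if l = j then some b else none))
      rw [if_neg (by omega), hv0def, Function.update_of_ne hli, if_neg h1]

end BN3

section BN4

variable {n : ℕ} (par : Fin n → Option (Fin n)) (r : Fin n → ℝ) (t : Fin n → Bool → ℝ)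
variable {c : ℝ}
variable (hpar : ∀ i j : Fin n, par i = some j → j < i)
variable (hbal_root : ∀ i : Fin n, par i = none → r i ∈ Set.Icc c (1 - c))
variable (hbal : ∀ i j : Fin n, par i = some j → ∀ b : Bool, t i b ∈ Set.Icc c (1 - c))

include hbal_root hbal in
lemma Ffac_nonneg (hc : 0 ≤ c) (x : Fin n → Bool) (k : Fin n) : 0 ≤ Ffac par r t x k :=
  le_trans hc (Ffac_mem par r t hbal_root hbal x k).1

include hpar hbal_root hbal in
lemma w_ge (hc : 0 ≤ c) (j : Fin n) (b : Bool) :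
    c ≤ Zb par r t (wfun j b) (below ((j : ℕ) + 1)) := by
  have hjn := j.isLt
  have hjmem : j ∈ (below ((j : ℕ) + 1) : Finset (Fin n)) := mem_below.2 (by omega)
  -- first : Zb (wfun j b) (below j) = 1
  have hwj : wfun j b j = some b := by
    show (if (j : ℕ) + 1 ≤ (j : ℕ) then some false else (if j = j then some b else none)) = some b
    rw [if_neg (by omega), if_pos rfl]
  have hcv := Zb_changeVal par r t hpar (wfun j b) (below (j : ℕ)) j b false hwj
      (fun l hl => mem_below.1 hl)
  have hred := Zb_reduce par r t hpar (j : ℕ) 0 (Function.update (wfun j b) j (some false))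
      (by omega) ?hv
  case hv =>
    intro k hk1 hk2
    rw [Nat.zero_add] at hk2
    rw [Function.update_of_ne (by intro h; subst h; omega)]
    show (if (j : ℕ) + 1 ≤ (k : ℕ) then some false else (if k = j then some b else none)) = none
    rw [if_neg (by omega), if_neg (by intro h; subst h; omega)]
  rw [Nat.zero_add] at hred
  have hb0 : (below 0 : Finset (Fin n)) = ∅ := by ext l; simp [mem_below]
  rw [hred, hb0, Zb_empty par r t _ ?hall] at hcv
  case hall =>
    intro l
    by_cases hl : (l : ℕ) < (j : ℕ)
    · rw [if_pos ⟨Nat.zero_le _, hl⟩]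
    · rw [if_neg (by omega), Function.update_apply]
      rcases eq_or_ne l j with rfl | hlj
      · rw [if_pos rfl]
      · rw [if_neg hlj]
        show (if (j : ℕ) + 1 ≤ (l : ℕ) then some false else (if l = j then some b else none))
          = some false
        rw [if_pos (by omega; )]
  -- now the bound
  rw [Zb]
  have key : ∀ x ∈ Sat (wfun j b),
      c * ∏ l ∈ below (j : ℕ), Ffac par r t x l ≤ ∏ k ∈ below ((j : ℕ) + 1), Ffac par r t x k := by
    intro x hx
    rw [← Finset.prod_erase_mul _ _ hjmem, below_erase, mul_comm c]
    exact mul_le_mul_of_nonneg_left (Ffac_mem par r t hbal_root hbal x j).1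
      (Finset.prod_nonneg fun l _ => Ffac_nonneg par r t hbal_root hbal hc x l)
  calc c = c * Zb par r t (wfun j b) (below (j : ℕ)) := by rw [hcv, mul_one]
    _ = ∑ x ∈ Sat (wfun j b), c * ∏ l ∈ below (j : ℕ), Ffac par r t x l := by
        rw [Zb, Finset.mul_sum]
    _ ≤ _ := Finset.sum_le_sum key

include hpar in
lemma marg_sum (j : Fin n) :
    Zb par r t (fun m => if m = j then some true else none) Finset.univ
      + Zb par r t (fun m => if m = j then some false else none) Finset.univ = 1 := by
  rw [← Zb_total par r t hpar]
  rw [Zb, Zb, Zb, Sat_single, Sat_single, Sat_none]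
  rw [← Finset.sum_filter_add_sum_filter_not Finset.univ (fun x : Fin n → Bool => x j = true)]
  congr 1
  apply Finset.sum_congr _ (fun x _ => rfl)
  apply Finset.filter_congr
  intro x _
  simp

end BN4

section Analytic

open Real

lemma klq {p ρ : ℝ} (hp : p ∈ Set.Ioo (0:ℝ) 1) (hρ : ρ ∈ Set.Ioo (0:ℝ) 1) :
    (p - ρ) ^ 2 ≤ p * Real.log (p / ρ) + (1 - p) * Real.log ((1 - p) / (1 - ρ)) := by
  obtain ⟨hp0, hp1⟩ := hp
  obtain ⟨hρ0, hρ1⟩ := hρ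
  set φ : ℝ → ℝ := fun y =>
    (((p * Real.log p - p * Real.log y) + (1 - p) * Real.log (1 - p))
      - (1 - p) * Real.log (1 - y)) - (p - y) ^ 2 with hφ
  have hval : ∀ y : ℝ, 0 < y → y < 1 →
      p * Real.log (p / y) + (1 - p) * Real.log ((1 - p) / (1 - y)) - (p - y) ^ 2 = φ y := by
    intro y h1 h2
    rw [hφ]
    rw [Real.log_div (ne_of_gt hp0) (ne_of_gt h1),
      Real.log_div (by linarith : (1:ℝ) - p ≠ 0) (by linarith : (1:ℝ) - y ≠ 0)]
    ring
  have hder : ∀ y ∈ Set.Ioo (0:ℝ) 1, HasDerivAt φ ((y - p) * (1 / (y * (1 - y)) - 2)) y := by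
    intro y hy
    obtain ⟨hy0, hy1⟩ := hy
    have h1 : HasDerivAt (fun y : ℝ => p * Real.log y) (p * y⁻¹) y :=
      (Real.hasDerivAt_log (ne_of_gt hy0)).const_mul p
    have h2 : HasDerivAt (fun y : ℝ => 1 - y) (-1) y := (hasDerivAt_id y).const_sub 1
    have h3 : HasDerivAt (fun y : ℝ => (1 - p) * Real.log (1 - y))
        ((1 - p) * ((1 - y)⁻¹ * (-1))) y :=
      (((Real.hasDerivAt_log (by linarith : (1:ℝ) - y ≠ 0)).comp y h2)).const_mul (1 - p)
    have h4 : HasDerivAt (fun y : ℝ => (p - y) ^ 2) (2 * (p - y) ^ 1 * (-1)) y := by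
      have h5 : HasDerivAt (fun y : ℝ => p - y) (-1) y := (hasDerivAt_id y).const_sub p
      exact h5.pow 2
    have H := ((((hasDerivAt_const y (p * Real.log p)).sub h1).add_const
      ((1 - p) * Real.log (1 - p))).sub h3).sub h4
    refine H.congr_deriv ?_
    have hyne : y ≠ 0 := ne_of_gt hy0
    have hyne1 : (1:ℝ) - y ≠ 0 := by linarith
    field_simp
    ring
  have hderivpos : ∀ y ∈ Set.Ioo (0:ℝ) 1, p < y → 0 < deriv φ y := by
    intro y hy hpy
    rw [(hder y hy).deriv]
    have h1 : 0 < y * (1 - y) := mul_pos hy.1 (by linarith [hy.2])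
    have h2 : y * (1 - y) ≤ 1 / 4 := by nlinarith [sq_nonneg (y - 1/2)]
    have h3 : (2:ℝ) < 1 / (y * (1 - y)) := by
      rw [lt_div_iff₀ h1]; nlinarith
    exact mul_pos (by linarith) (by linarith)
  have hderivneg : ∀ y ∈ Set.Ioo (0:ℝ) 1, y < p → deriv φ y < 0 := by
    intro y hy hpy
    rw [(hder y hy).deriv]
    have h1 : 0 < y * (1 - y) := mul_pos hy.1 (by linarith [hy.2])
    have h2 : y * (1 - y) ≤ 1 / 4 := by nlinarith [sq_nonneg (y - 1/2)]
    have h3 : (2:ℝ) < 1 / (y * (1 - y)) := by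
      rw [lt_div_iff₀ h1]; nlinarith
    exact mul_neg_of_neg_of_pos (by linarith) (by linarith)
  have hφp : φ p = 0 := by rw [hφ]; ring
  have hmain : 0 ≤ φ ρ := by
    rcases lt_trichotomy p ρ with h | h | h
    · have hsub : Set.Icc p ρ ⊆ Set.Ioo (0:ℝ) 1 := fun y hy =>
        ⟨lt_of_lt_of_le hp0 hy.1, lt_of_le_of_lt hy.2 hρ1⟩
      have hcont : ContinuousOn φ (Set.Icc p ρ) := fun y hy =>
        (hder y (hsub hy)).continuousAt.continuousWithinAt
      have hmono : StrictMonoOn φ (Set.Icc p ρ) := by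
        apply strictMonoOn_of_deriv_pos (convex_Icc p ρ) hcont
        intro y hy
        rw [interior_Icc] at hy
        exact hderivpos y (hsub ⟨le_of_lt hy.1, le_of_lt hy.2⟩) hy.1
      have := hmono (Set.left_mem_Icc.2 (le_of_lt h)) (Set.right_mem_Icc.2 (le_of_lt h)) h
      rw [hφp] at this
      exact le_of_lt this
    · subst h; rw [hφp]
    · have hsub : Set.Icc ρ p ⊆ Set.Ioo (0:ℝ) 1 := fun y hy =>
        ⟨lt_of_lt_of_le hρ0 hy.1, lt_of_le_of_lt hy.2 hp1⟩
      have hcont : ContinuousOn φ (Set.Icc ρ p) := fun y hy =>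
        (hder y (hsub hy)).continuousAt.continuousWithinAt
      have hanti : StrictAntiOn φ (Set.Icc ρ p) := by
        apply strictAntiOn_of_deriv_neg (convex_Icc ρ p) hcont
        intro y hy
        rw [interior_Icc] at hy
        exact hderivneg y (hsub ⟨le_of_lt hy.1, le_of_lt hy.2⟩) hy.2
      have := hanti (Set.left_mem_Icc.2 (le_of_lt h)) (Set.right_mem_Icc.2 (le_of_lt h)) h
      rw [hφp] at this
      exact le_of_lt this
  have := hval ρ hρ0 hρ1
  linarith [hmain, this.symm ▸ hmain]

end Analytic

section Analytic2

lemma mi_lower (c γ q : ℝ) (τ : Bool → ℝ) (hc1 : 0 < c) (hc2 : c ≤ 1/2)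
    (hγ : 0 < γ) (hq : q ∈ Set.Icc c (1 - c)) (hτ : ∀ b, τ b ∈ Set.Icc c (1 - c))
    (hnd : γ ≤ |τ true - τ false|) :
    c * γ ^ 2 / (2 * Real.log 2) ≤
      miBB (fun ab => (if ab.1 then τ ab.2 else 1 - τ ab.2) * (if ab.2 then q else 1 - q)) := by
  set tT := τ true with htT
  set tF := τ false with htF
  have htTm := hτ true
  have htFm := hτ false
  rw [← htT] at htTm
  rw [← htF] at htFm
  set ν : Bool × Bool → ℝ :=
    fun ab => (if ab.1 then τ ab.2 else 1 - τ ab.2) * (if ab.2 then q else 1 - q) with hν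
  have hexp : ∀ f : Bool × Bool → ℝ,
      ∑ z : Bool × Bool, f z = f (false, false) + f (false, true) + f (true, false) + f (true, true) := by
    intro f
    rw [Fintype.sum_prod_type]
    simp only [Fintype.sum_bool]
    ring
  have e1 : ν (true, true) = tT * q := by simp [hν, htT]
  have e2 : ν (true, false) = tF * (1 - q) := by simp [hν, htF]
  have e3 : ν (false, true) = (1 - tT) * q := by simp [hν, htT]
  have e4 : ν (false, false) = (1 - tF) * (1 - q) := by simp [hν, htF]
  rw [miBB, hexp]
  simp only [Fintype.sum_bool]
  rw [e1, e2, e3, e4]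
  obtain ⟨hqc, hq1c⟩ := hq
  obtain ⟨htT1, htT2⟩ := htTm
  obtain ⟨htF1, htF2⟩ := htFm
  have hq0 : 0 < q := lt_of_lt_of_le hc1 hqc
  have hq1 : q < 1 := by linarith
  have hqne : q ≠ 0 := ne_of_gt hq0
  have h1qne : 1 - q ≠ 0 := by intro h; linarith [h]
  have hSmem : tT * q + tF * (1 - q) ∈ Set.Ioo (0:ℝ) 1 := by
    constructor <;> nlinarith
  have htTio : tT ∈ Set.Ioo (0:ℝ) 1 := ⟨by linarith, by linarith⟩
  have htFio : tF ∈ Set.Ioo (0:ℝ) 1 := ⟨by linarith, by linarith⟩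
  have r1 : (1 - tT) * q + (1 - tF) * (1 - q) = 1 - (tT * q + tF * (1 - q)) := by ring
  have r2 : tF * (1 - q) + (1 - tF) * (1 - q) = 1 - q := by ring
  have r3 : tT * q + (1 - tT) * q = q := by ring
  rw [r1, r2, r3]
  rw [mul_div_mul_right _ _ hqne, mul_div_mul_right _ _ hqne,
    mul_div_mul_right _ _ h1qne, mul_div_mul_right _ _ h1qne]
  simp only [Real.logb]
  have hlog2 : 0 < Real.log 2 := Real.log_pos (by norm_num)
  set S := tT * q + tF * (1 - q) with hS
  -- Pinsker-type bounds
  have h5 := klq htTio hSmem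
  have h6 := klq htFio hSmem
  -- quantitative bound
  have hΔ2 : γ ^ 2 ≤ (tT - tF) ^ 2 := by
    calc γ ^ 2 ≤ |tT - tF| ^ 2 := pow_le_pow_left₀ (le_of_lt hγ) hnd 2
      _ = (tT - tF) ^ 2 := sq_abs _
  have hq1q : c / 2 ≤ q * (1 - q) := by nlinarith [mul_nonneg (by linarith : (0:ℝ) ≤ q - c) (by linarith : (0:ℝ) ≤ 1 - c - q)]
  have hC : c / 2 * γ ^ 2 ≤ q * (1 - q) * (tT - tF) ^ 2 :=
    mul_le_mul hq1q hΔ2 (sq_nonneg γ) (mul_nonneg (le_of_lt hq0) (by linarith))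
  have hid : q * (tT - S) ^ 2 + (1 - q) * (tF - S) ^ 2 = q * (1 - q) * (tT - tF) ^ 2 := by
    rw [hS]; ring
  have key : c * γ ^ 2 / 2 ≤
      q * (tT * Real.log (tT / S) + (1 - tT) * Real.log ((1 - tT) / (1 - S)))
      + (1 - q) * (tF * Real.log (tF / S) + (1 - tF) * Real.log ((1 - tF) / (1 - S))) := by
    have hA : q * (tT - S) ^ 2 ≤ q * (tT * Real.log (tT / S) + (1 - tT) * Real.log ((1 - tT) / (1 - S))) :=
      mul_le_mul_of_nonneg_left h5 (le_of_lt hq0)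
    have hB : (1 - q) * (tF - S) ^ 2 ≤ (1 - q) * (tF * Real.log (tF / S) + (1 - tF) * Real.log ((1 - tF) / (1 - S))) :=
      mul_le_mul_of_nonneg_left h6 (by linarith)
    linarith [hA, hB, hC, hid.le, hid.ge]
  calc c * γ ^ 2 / (2 * Real.log 2) = (c * γ ^ 2 / 2) / Real.log 2 := by ring
    _ ≤ (q * (tT * Real.log (tT / S) + (1 - tT) * Real.log ((1 - tT) / (1 - S)))
      + (1 - q) * (tF * Real.log (tF / S) + (1 - tF) * Real.log ((1 - tF) / (1 - S)))) / Real.log 2 := by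
        exact (div_le_div_iff_of_pos_right hlog2).mpr key
    _ = (1 - tF) * (1 - q) * (Real.log ((1 - tF) / (1 - S)) / Real.log 2)
      + (1 - tT) * q * (Real.log ((1 - tT) / (1 - S)) / Real.log 2)
      + tF * (1 - q) * (Real.log (tF / S) / Real.log 2)
      + tT * q * (Real.log (tT / S) / Real.log 2) := by ring

end Analytic2


theorem stmt16 (n : ℕ) (c γ : ℝ) (hc : c ∈ Set.Ioc (0:ℝ) (1/2)) (hγ : γ ∈ Set.Ioo (0:ℝ) 1)
    (par : Fin n → Option (Fin n)) (hpar : ∀ i j : Fin n, par i = some j → j < i)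
    (r : Fin n → ℝ) (t : Fin n → Bool → ℝ)
    (hbal_root : ∀ i : Fin n, par i = none → r i ∈ Set.Icc c (1 - c))
    (hbal : ∀ i j : Fin n, par i = some j → ∀ b : Bool, t i b ∈ Set.Icc c (1 - c))
    (hnondeg : ∀ i j : Fin n, par i = some j → γ ≤ |t i true - t i false|)
    (i j : Fin n) (hij : par i = some j) :
    c * γ ^ 2 / (2 * Real.log 2) ≤ miBB (pairLaw (treeBN par r t) i j) := by
  obtain ⟨hc1, hc2⟩ := hc
  obtain ⟨hγ1, _⟩ := hγ
  set q : ℝ := Zb par r t (wfun j true) (below ((j : ℕ) + 1)) with hqdef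
  set qf : ℝ := Zb par r t (wfun j false) (below ((j : ℕ) + 1)) with hqfdef
  have hqt : c ≤ q := w_ge par r t hpar hbal_root hbal (le_of_lt hc1) j true
  have hqf : c ≤ qf := w_ge par r t hpar hbal_root hbal (le_of_lt hc1) j false
  have hsum : q + qf = 1 := by
    rw [hqdef, hqfdef, ← marg_eq par r t hpar j true, ← marg_eq par r t hpar j false]
    exact marg_sum par r t hpar j
  have hfun : pairLaw (treeBN par r t) i j =
      fun ab => (if ab.1 then t i ab.2 else 1 - t i ab.2) * (if ab.2 then q else 1 - q) := by
    funext ab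
    obtain ⟨a, b⟩ := ab
    rw [pair_eq par r t hpar i j hij a b]
    cases b
    · show (if a then t i false else 1 - t i false) * qf
        = (if a then t i false else 1 - t i false) * (if false then q else 1 - q)
      have : qf = 1 - q := by linarith
      rw [this]
      norm_num
    · show (if a then t i true else 1 - t i true) * q
        = (if a then t i true else 1 - t i true) * (if true then q else 1 - q)
      norm_num
  rw [hfun]
  exact mi_lower c γ q (t i) hc1 hc2 hγ1 ⟨hqt, by linarith⟩
    (fun b => hbal i j hij b) (hnondeg i j hij)
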